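/- Containment of segments in level intervals: if i < w < m^ℓ and j is the largest base-m digit position in which i and w differ, then both i and x(i,w) − 1 lie in the same level-j interval I_{j,r} (i.e., ⌊i/m^{j+1}⌋ = ⌊(x(i,w)−1)/m^{j+1}⌋), and moreover x(i,w) is a multiple of m^{j'} for every j' ≤ j. -/

import Mathlib

/-- The `j`-th base-`m` digit of `i`. -/
def digit (m j i : ℕ) : ℕ := (i / m ^ j) % m

/-- The largest base-`m` digit position (below `ℓ`) in which `i` and `w` differ. -/
def topDiff (m ℓ i w : ℕ) : ℕ :=
  Nat.findGreatest (fun j => digit m j i ≠ digit m j w) ℓ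

/-- The intermediate destination `x(i, w) = ⌊w / m^{j(i,w)}⌋ · m^{j(i,w)}`. -/
def interDest (m ℓ i w : ℕ) : ℕ :=
  (w / m ^ topDiff m ℓ i w) * m ^ topDiff m ℓ i w

lemma digit_ext_aux (m : ℕ) (hm : 2 ≤ m) :
    ∀ n a b, a + b ≤ n → (∀ t, digit m t a = digit m t b) → a = b := by
  intro n
  induction n with
  | zero => intro a b h _; omega
  | succ n ih =>
    intro a b hab hd
    rcases Nat.eq_zero_or_pos (a + b) with h0 | hpos
    · omega
    have hmod : a % m = b % m := by
      have := hd 0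
      simpa [digit] using this
    have hle : a / m + b / m ≤ n := by
      have ha : a / m ≤ a := Nat.div_le_self _ _
      have hb : b / m ≤ b := Nat.div_le_self _ _
      rcases Nat.eq_zero_or_pos a with ha0 | hap
      · have hbp : 0 < b := by omega
        have : b / m < b := Nat.div_lt_self hbp (by omega)
        omega
      · have : a / m < a := Nat.div_lt_self hap (by omega)
        omega
    have hd' : ∀ t, digit m t (a / m) = digit m t (b / m) := by
      intro t
      have h1 : a / m / m ^ t = a / m ^ (t + 1) := by
        rw [Nat.div_div_eq_div_mul, pow_succ']
      have h2 : b / m / m ^ t = b / m ^ (t + 1) := by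
        rw [Nat.div_div_eq_div_mul, pow_succ']
      simp only [digit, h1, h2]
      exact hd (t + 1)
    have hdiv : a / m = b / m := ih (a / m) (b / m) hle hd'
    have h1 := Nat.div_add_mod a m
    have h2 := Nat.div_add_mod b m
    rw [hdiv] at h1
    omega

lemma digit_ext (m a b : ℕ) (hm : 2 ≤ m) (h : ∀ t, digit m t a = digit m t b) : a = b :=
  digit_ext_aux m hm (a + b) a b le_rfl h

lemma digit_div_pow (m s t a : ℕ) : digit m t (a / m ^ s) = digit m (s + t) a := by
  simp [digit, Nat.div_div_eq_div_mul, pow_add]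

theorem segment_in_level_interval (m ℓ i w : ℕ) (hm : 2 ≤ m) (hℓ : 1 ≤ ℓ)
    (hiw : i < w) (hw : w < m ^ ℓ) :
    i / m ^ (topDiff m ℓ i w + 1) = (interDest m ℓ i w - 1) / m ^ (topDiff m ℓ i w + 1) ∧
      ∀ j', j' ≤ topDiff m ℓ i w → m ^ j' ∣ interDest m ℓ i w := by
  set j := topDiff m ℓ i w with hjdef
  have hi : i < m ^ ℓ := lt_trans hiw hw
  -- there is a differing digit
  have hex : ∃ k, k ≤ ℓ ∧ digit m k i ≠ digit m k w := by
    by_contra h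
    push_neg at h
    apply Nat.ne_of_lt hiw
    apply digit_ext m i w hm
    intro t
    rcases le_or_gt t ℓ with h1 | h1
    · exact h t h1
    · have hle : m ^ ℓ ≤ m ^ t := Nat.pow_le_pow_right (by omega) h1.le
      have hi0 : i / m ^ t = 0 := Nat.div_eq_of_lt (lt_of_lt_of_le hi hle)
      have hw0 : w / m ^ t = 0 := Nat.div_eq_of_lt (lt_of_lt_of_le hw hle)
      simp [digit, hi0, hw0]
  obtain ⟨k, hkℓ, hk⟩ := hex
  have hPj : digit m j i ≠ digit m j w := by
    have := Nat.findGreatest_spec (P := fun t => digit m t i ≠ digit m t w) hkℓ hk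
    simpa [hjdef, topDiff] using this
  have hagree : ∀ t, j < t → digit m t i = digit m t w := by
    intro t ht
    rcases le_or_gt t ℓ with h1 | h1
    · by_contra hne'
      have hj' : Nat.findGreatest (fun t => digit m t i ≠ digit m t w) ℓ < t := ht
      exact Nat.findGreatest_is_greatest hj' h1 hne'
    · have hle : m ^ ℓ ≤ m ^ t := Nat.pow_le_pow_right (by omega) h1.le
      have hi0 : i / m ^ t = 0 := Nat.div_eq_of_lt (lt_of_lt_of_le hi hle)
      have hw0 : w / m ^ t = 0 := Nat.div_eq_of_lt (lt_of_lt_of_le hw hle)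
      simp [digit, hi0, hw0]
  -- equal high quotients
  have hq : i / m ^ (j + 1) = w / m ^ (j + 1) := by
    apply digit_ext m _ _ hm
    intro t
    rw [digit_div_pow, digit_div_pow]
    exact hagree (j + 1 + t) (by omega)
  set M := m ^ (j + 1) with hM
  have hMpos : 0 < M := Nat.pow_pos (by omega)
  have hpow : 0 < m ^ j := Nat.pow_pos (by omega)
  -- remainders compare
  have hri : i % M < w % M := by
    have h1 := Nat.div_add_mod i M
    have h2 := Nat.div_add_mod w M
    have := hq
    nlinarith [Nat.mod_lt i hMpos, Nat.mod_lt w hMpos]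
  have hMeq : M = m ^ j * m := by rw [hM, pow_succ]
  have hdi : digit m j i = i % M / m ^ j := by
    rw [digit, hMeq, Nat.mod_mul_right_div_self]
  have hdw : digit m j w = w % M / m ^ j := by
    rw [digit, hMeq, Nat.mod_mul_right_div_self]
  have hdle : digit m j i ≤ digit m j w := by
    rw [hdi, hdw]; exact Nat.div_le_div_right hri.le
  have hdlt : digit m j i < digit m j w := lt_of_le_of_ne hdle hPj
  have hdw1 : 1 ≤ (w / m ^ j) % m := by
    have : 1 ≤ digit m j w := by omega
    simpa [digit] using this
  set x := interDest m ℓ i w with hx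
  have hxeq : x = (w / m ^ j) * m ^ j := rfl
  have hxmod : x % M = (w / m ^ j) % m * m ^ j := by
    rw [hxeq, hMeq, mul_comm (m ^ j) m, Nat.mul_mod_mul_right]
  have hxdiv : x / M = w / M := by
    rw [hxeq, hMeq, ← Nat.div_div_eq_div_mul, Nat.mul_div_cancel _ hpow,
      ← Nat.div_div_eq_div_mul]
  have hxmodpos : 1 ≤ x % M := by
    rw [hxmod]
    calc 1 ≤ m ^ j := hpow
    _ = 1 * m ^ j := (one_mul _).symm
    _ ≤ (w / m ^ j) % m * m ^ j := Nat.mul_le_mul_right _ hdw1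
  have hxsub : (x - 1) / M = x / M := by
    have h1 : M * (x / M) + x % M = x := Nat.div_add_mod x M
    have hrM : x % M < M := Nat.mod_lt _ hMpos
    have h2 : x - 1 = M * (x / M) + (x % M - 1) := by omega
    have h3 : x % M - 1 < M := by omega
    rw [h2, Nat.mul_add_div hMpos, Nat.div_eq_of_lt h3]
    omega
  constructor
  · rw [hxsub, hxdiv, ← hq]
  · intro j' hj'
    rw [hxeq]
    exact Dvd.dvd.mul_left (pow_dvd_pow m hj') _
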